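/- Define real coefficients α(n,k,i), for natural numbers n, k, i with k ≤ n and 2i ≤ n−k, by the recurrence α(n,k,i) = 2^{k+2i} · (n−1/2)^{\underline{k}} · (n−i)^{\underline{i}} · (n−k−1/2)^{\underline{2i}} / ((2i)^{\underline{2i}} · (n−1/2)^{\underline{i}}) − Σ_{l=0}^{i−1} ( (2(n−k−i−l))^{\underline{2(i−l)}} / (2(i−l))^{\underline{2(i−l)}} ) · α(n,k,l), where x^{\underline{m}} = x(x−1)⋯(x−m+1) denotes the falling factorial with x^{\underline{0}} = 1. Then for all natural numbers n, k with k ≤ n and every real x, the k-th derivative of the Legendre polynomial satisfies d^k/dx^k P_n(x) = Σ_{i=0}^{⌊(n−k)/2⌋} α(n,k,i) · P_{n−k−2i}(x). -/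

import Mathlib

/-- Legendre polynomial via Rodrigues' formula. -/
noncomputable def legendre (n : ℕ) : ℝ → ℝ :=
  fun x => (1 / (2 ^ n * (n.factorial : ℝ))) * iteratedDeriv n (fun y => (y ^ 2 - 1) ^ n) x

/-- Falling factorial of a real number: `x^{(m)} = x (x-1) ⋯ (x-m+1)`. -/
noncomputable def fallingFactorial (x : ℝ) (m : ℕ) : ℝ := ∏ i ∈ Finset.range m, (x - i)

namespace LegAux

open Polynomial Finset

lemma ff_zero (x : ℝ) : fallingFactorial x 0 = 1 := by simp [fallingFactorial]

lemma ff_succ (x : ℝ) (k : ℕ) :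
    fallingFactorial x (k+1) = fallingFactorial x k * (x - k) := by
  simp [fallingFactorial, Finset.prod_range_succ]

lemma ff_add (x : ℝ) (a b : ℕ) :
    fallingFactorial x (a + b) = fallingFactorial x a * fallingFactorial (x - a) b := by
  induction b with
  | zero => simp [ff_zero]
  | succ b ih =>
      have h : a + (b + 1) = (a + b) + 1 := by omega
      rw [h, ff_succ, ih, ff_succ]
      push_cast
      ring

lemma ff_two (x : ℝ) (k : ℕ) :
    fallingFactorial (2*x) (2*k) = 4^k * fallingFactorial x k * fallingFactorial (x - 1/2) k := by
  induction k with
  | zero => simp [ff_zero]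
  | succ k ih =>
      have h : 2 * (k + 1) = (2*k) + 1 + 1 := by omega
      rw [h, ff_succ, ff_succ, ih, ff_succ, ff_succ]
      push_cast
      ring

lemma ff_nat (m j : ℕ) : fallingFactorial (m : ℝ) j = (m.descFactorial j : ℝ) := by
  induction j with
  | zero => simp [ff_zero]
  | succ j ih =>
      rw [ff_succ, ih, Nat.descFactorial_succ]
      rcases le_or_gt j m with h | h
      · push_cast [h]
        ring
      · rw [Nat.descFactorial_eq_zero_iff_lt.2 h]
        simp [Nat.sub_eq_zero_of_le h.le]

lemma ff_fact (N j : ℕ) (h : j ≤ N) :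
    fallingFactorial (N : ℝ) j * ((N - j).factorial : ℝ) = (N.factorial : ℝ) := by
  rw [ff_nat, ← Nat.cast_mul, mul_comm, Nat.factorial_mul_descFactorial h]

lemma ff_ne_zero_half (n i : ℕ) (h : i ≤ n) : fallingFactorial ((n : ℝ) - 1/2) i ≠ 0 := by
  unfold fallingFactorial
  rw [Finset.prod_ne_zero_iff]
  intro t ht
  rw [Finset.mem_range] at ht
  have : (t : ℝ) + 1 ≤ n := by exact_mod_cast Nat.succ_le_of_lt (lt_of_lt_of_le ht h)
  intro hz
  nlinarith

lemma dF_cast (m j : ℕ) (h : j ≤ m) :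
    (m.descFactorial j : ℝ) = (m.factorial : ℝ) / ((m - j).factorial : ℝ) := by
  rw [eq_div_iff (by exact_mod_cast (m - j).factorial_ne_zero)]
  rw [← Nat.cast_mul, mul_comm, Nat.factorial_mul_descFactorial h]

noncomputable def Leg (n : ℕ) : ℝ[X] :=
  C ((1:ℝ)/(2^n * n.factorial)) * derivative^[n] ((X^2 - C 1)^n)

lemma iteratedDeriv_poly (p : ℝ[X]) (k : ℕ) :
    iteratedDeriv k (fun x => p.eval x) = fun x => (derivative^[k] p).eval x := by
  induction k with
  | zero => simp [iteratedDeriv_zero]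
  | succ k ih =>
      rw [iteratedDeriv_succ, ih, Function.iterate_succ_apply']
      funext x
      exact Polynomial.deriv _

lemma legendre_eq (n : ℕ) : legendre n = fun x => (Leg n).eval x := by
  funext x
  unfold legendre Leg
  have h : (fun y : ℝ => (y^2-1)^n) = fun y => ((X^2 - C 1 : ℝ[X])^n).eval y := by
    funext y; simp
  rw [h, iteratedDeriv_poly]
  simp

lemma iteratedDeriv_legendre (n k : ℕ) (x : ℝ) :
    iteratedDeriv k (legendre n) x = (derivative^[k] (Leg n)).eval x := by
  rw [legendre_eq, iteratedDeriv_poly]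

lemma natDegree_Leg (n : ℕ) : (Leg n).natDegree ≤ n := by
  unfold Leg
  refine le_trans (natDegree_C_mul_le _ _) (le_trans (natDegree_iterate_derivative _ _) ?_)
  have h1 : ((X^2 - C 1 : ℝ[X])^n).natDegree ≤ 2*n := by
    refine le_trans (natDegree_pow_le) ?_
    have : (X^2 - C 1 : ℝ[X]).natDegree ≤ 2 := by
      refine le_trans (natDegree_sub_le _ _) ?_
      simp
    nlinarith
  omega

lemma eval_one_base (m j : ℕ) (hj : j ≤ m) :
    eval 1 (derivative^[m + j] ((X^2 - C 1 : ℝ[X])^m)) =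
      ((m+j).choose j : ℝ) * m.factorial * m.descFactorial j * 2^(m-j) := by
  have hfac : (X^2 - C 1 : ℝ[X])^m = (X - C 1)^m * (X + C 1)^m := by
    rw [← mul_pow]
    congr 1
    ring_nf
    simp
  rw [hfac, iterate_derivative_mul, eval_finset_sum]
  rw [Finset.sum_eq_single j]
  · rw [iterate_derivative_X_sub_pow, iterate_derivative_X_add_pow]
    have h1 : m + j - j = m := by omega
    rw [h1]
    simp [Nat.descFactorial_self, Nat.sub_self]
    ring_nf
  · intro r hr hrj
    rw [iterate_derivative_X_sub_pow, iterate_derivative_X_add_pow]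
    rcases lt_or_gt_of_ne hrj with h | h
    · have : m < m + j - r := by omega
      rw [Nat.descFactorial_eq_zero_iff_lt.2 this]
      simp
    · have he : m - (m + j - r) ≠ 0 := by
        rw [Finset.mem_range] at hr; omega
      simp [eval_smul, eval_mul, eval_pow, show (1:ℝ)-1 = 0 from by ring,
        zero_pow he]
  · intro h
    exact absurd (Finset.mem_range.2 (by omega)) h

/-- value of the j-th derivative of the normalized Legendre polynomial at 1 -/
noncomputable def V (m j : ℕ) : ℝ := ((m+j).choose j : ℝ) * m.descFactorial j / 2^j

lemma eval_one_Leg (m j : ℕ) (hj : j ≤ m) :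
    eval 1 (derivative^[j] (Leg m)) = V m j := by
  unfold Leg V
  rw [iterate_derivative_C_mul, eval_mul, eval_C,
    ← Function.iterate_add_apply, show j + m = m + j from by omega,
    eval_one_base m j hj]
  have h2 : (2:ℝ)^m = 2^j * 2^(m-j) := by
    rw [← pow_add]
    congr 1
    omega
  have hm : (m.factorial : ℝ) ≠ 0 := by exact_mod_cast m.factorial_ne_zero
  field_simp [h2]
  rw [h2]; ring


lemma deriv_comp_neg (q : ℝ[X]) :
    (derivative q).comp (-X) = - derivative (q.comp (-X)) := by
  rw [derivative_comp]
  simp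

lemma comp_neg_iterate (p : ℝ[X]) (k : ℕ) :
    (derivative^[k] p).comp (-X) = C ((-1)^k : ℝ) * derivative^[k] (p.comp (-X)) := by
  induction k with
  | zero => simp
  | succ k ih =>
      rw [Function.iterate_succ_apply', deriv_comp_neg, ih,
        Function.iterate_succ_apply']
      rw [derivative_C_mul]
      rw [show ((-1:ℝ))^(k+1) = -(-1)^k from by ring]
      simp

lemma base_comp_neg (m : ℕ) : ((X^2 - C 1 : ℝ[X])^m).comp (-X) = (X^2 - C 1)^m := by
  rw [pow_comp, sub_comp, pow_comp, X_comp, C_comp]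
  congr 2
  ring

lemma Leg_comp_neg (m : ℕ) : (Leg m).comp (-X) = C ((-1)^m : ℝ) * Leg m := by
  unfold Leg
  rw [mul_comp, C_comp, comp_neg_iterate, base_comp_neg]
  ring

lemma poly_eq_zero (Q : ℝ[X]) (N : ℕ) (hdeg : Q.natDegree ≤ N)
    (hpar : Q.comp (-X) = C ((-1)^N : ℝ) * Q)
    (hvan : ∀ i, 2*i ≤ N → eval 1 (derivative^[N - 2*i] Q) = 0) : Q = 0 := by
  by_contra hQ
  set m := Q.natDegree with hm
  have hlc : Q.leadingCoeff ≠ 0 := leadingCoeff_ne_zero.2 hQ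
  have hp : ((-1:ℝ))^m = (-1)^N := by
    have hX : (-X : ℝ[X]).natDegree ≠ 0 := by
      rw [natDegree_neg, natDegree_X]; omega
    have h1 := congrArg leadingCoeff hpar
    rw [leadingCoeff_comp hX, leadingCoeff_mul, leadingCoeff_C] at h1
    have h2 : (-X : ℝ[X]).leadingCoeff = -1 := by
      rw [leadingCoeff_neg, leadingCoeff_X]
    rw [h2] at h1
    rw [mul_comm Q.leadingCoeff] at h1
    exact mul_right_cancel₀ hlc h1
  have hdvd : 2 ∣ (N - m) := by
    by_contra hnd
    have hNm : N = m + (N - m) := by omega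
    have hodd : Odd (N - m) := Nat.odd_iff.2 (by omega)
    rw [hNm, pow_add, hodd.neg_one_pow] at hp
    have hz : ((-1:ℝ))^m = 0 := by linarith
    exact pow_ne_zero m (by norm_num : (-1:ℝ) ≠ 0) hz
  have h2i : N - 2 * ((N - m)/2) = m := by omega
  have := hvan ((N - m)/2) (by omega)
  rw [h2i] at this
  have hdeg0 : (derivative^[m] Q).natDegree ≤ 0 :=
    le_trans (natDegree_iterate_derivative _ _) (by omega)
  have hC := eq_C_of_natDegree_le_zero hdeg0
  rw [hC, eval_C, coeff_iterate_derivative] at this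
  simp only [zero_add] at this
  rw [Nat.descFactorial_self] at this
  have : (m.factorial : ℝ) * Q.coeff m = 0 := by
    rw [nsmul_eq_mul] at this; exact this
  have hf : (m.factorial : ℝ) ≠ 0 := by exact_mod_cast m.factorial_ne_zero
  have : Q.coeff m = 0 := by
    rcases mul_eq_zero.1 this with h | h
    · exact absurd h hf
    · exact h
  exact hlc this



lemma keyB_core (d J : ℕ) :
    V (d + 2*J) d = V d d * (((2*(d+J)).descFactorial (2*J) : ℝ) / ((2*J).factorial : ℝ)) := by
  unfold V
  rw [show 2*(d+J) = d + 2*J + d from by omega]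
  rw [Nat.cast_choose ℝ (show d ≤ d + 2*J + d by omega),
      Nat.cast_choose ℝ (show d ≤ d + d by omega),
      show d + 2*J + d - d = d + 2*J from by omega,
      show d + d - d = d from by omega,
      dF_cast (d + 2*J) d (by omega),
      dF_cast (d + 2*J + d) (2*J) (by omega),
      show d + 2*J - d = 2*J from by omega,
      show d + 2*J + d - 2*J = d + d from by omega,
      Nat.descFactorial_self]
  have f1 : ((d + 2*J + d).factorial : ℝ) ≠ 0 := by exact_mod_cast Nat.factorial_ne_zero _
  have f2 : ((d + 2*J).factorial : ℝ) ≠ 0 := by exact_mod_cast Nat.factorial_ne_zero _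
  have f3 : ((2*J).factorial : ℝ) ≠ 0 := by exact_mod_cast Nat.factorial_ne_zero _
  have f4 : ((d + d).factorial : ℝ) ≠ 0 := by exact_mod_cast Nat.factorial_ne_zero _
  have f5 : (d.factorial : ℝ) ≠ 0 := by exact_mod_cast Nat.factorial_ne_zero _
  have f6 : (2:ℝ)^d ≠ 0 := by positivity
  field_simp




lemma ff_ne_zero_half' (c : ℝ) (j : ℕ) (hpos : (j:ℝ) ≤ c) :
    fallingFactorial (c - 1/2) j ≠ 0 := by
  unfold fallingFactorial
  rw [Finset.prod_ne_zero_iff]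
  intro t ht
  rw [Finset.mem_range] at ht
  have : (t : ℝ) + 1 ≤ j := by exact_mod_cast Nat.succ_le_of_lt ht
  intro hz
  nlinarith

set_option maxHeartbeats 2000000 in
lemma keyA_core (k i d : ℕ) :
    V (k + 2*i + d) (k + d) = V d d *
      (2^(k + 2*i) * fallingFactorial ((k:ℝ) + 2*i + d - 1/2) k *
        fallingFactorial ((k:ℝ) + i + d) i *
        fallingFactorial ((2*i:ℝ) + d - 1/2) (2*i) /
       (((2*i).factorial : ℝ) * fallingFactorial ((k:ℝ) + 2*i + d - 1/2) i)) := by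
  have hAk : fallingFactorial ((k:ℝ) + 2*i + d - 1/2) k ≠ 0 := by
    have := ff_ne_zero_half' ((k:ℝ) + 2*i + d) k (by push_cast; nlinarith [Nat.cast_nonneg (α := ℝ) i, Nat.cast_nonneg (α := ℝ) d])
    convert this using 2
  -- split F(A, k) * F(A - k, 2i) = F(A, i) * F(x - 1/2, k + i)
  have hsplit : fallingFactorial ((k:ℝ) + 2*i + d - 1/2) k *
      fallingFactorial ((2*i:ℝ) + d - 1/2) (2*i)
      = fallingFactorial ((k:ℝ) + 2*i + d - 1/2) i *
        fallingFactorial ((k:ℝ) + i + d - 1/2) (k + i) := by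
    have h1 := ff_add ((k:ℝ) + 2*i + d - 1/2) k (2*i)
    have h2 := ff_add ((k:ℝ) + 2*i + d - 1/2) i (k + i)
    rw [show ((k:ℝ) + 2*i + d - 1/2) - k = (2*i:ℝ) + d - 1/2 from by push_cast; ring] at h1
    rw [show ((k:ℝ) + 2*i + d - 1/2) - i = (k:ℝ) + i + d - 1/2 from by push_cast; ring] at h2
    rw [← h1, show k + 2*i = i + (k + i) from by omega, h2]
  -- factorial of 2(k+i+d)
  have h2fac : ((2*(k+i+d)).factorial : ℝ)
      = 4^(k+i) * ((k+i+d).descFactorial (k+i) : ℝ) *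
        fallingFactorial ((k:ℝ) + i + d - 1/2) (k + i) * ((2*d).factorial : ℝ) := by
    have h := ff_fact (2*(k+i+d)) (2*(k+i)) (by omega)
    rw [show 2*(k+i+d) - 2*(k+i) = 2*d from by omega] at h
    rw [← h]
    rw [show ((2*(k+i+d) : ℕ) : ℝ) = 2 * ((k:ℝ) + i + d) from by push_cast; ring]
    rw [ff_two]
    rw [show fallingFactorial ((k:ℝ) + i + d) (k+i)
        = ((k+i+d).descFactorial (k+i) : ℝ) from by
      rw [show (k:ℝ) + i + d = ((k+i+d : ℕ) : ℝ) from by push_cast; try ring, ff_nat]]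
    try ring
  -- F((k:ℝ)+i+d) i as descFactorial
  have hB : fallingFactorial ((k:ℝ) + i + d) i = ((k+i+d).descFactorial i : ℝ) := by
    rw [show (k:ℝ) + i + d = ((k+i+d : ℕ) : ℝ) from by push_cast; ring, ff_nat]
  unfold V
  rw [hB]
  rw [Nat.cast_choose ℝ (show k + d ≤ k + 2*i + d + (k + d) by omega),
      Nat.cast_choose ℝ (show d ≤ d + d by omega),
      show k + 2*i + d + (k + d) - (k + d) = k + 2*i + d from by omega,
      show d + d - d = d from by omega,
      dF_cast (k + 2*i + d) (k + d) (by omega),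
      show k + 2*i + d - (k + d) = 2*i from by omega,
      dF_cast (k+i+d) i (by omega),
      show k + i + d - i = k + d from by omega,
      Nat.descFactorial_self]
  rw [show k + 2*i + d + (k + d) = 2*(k+i+d) from by omega, h2fac,
      dF_cast (k+i+d) (k+i) (by omega),
      show k + i + d - (k+i) = d from by omega]
  have hsplit' : fallingFactorial ((2*i:ℝ) + d - 1/2) (2*i)
      = fallingFactorial ((k:ℝ) + 2*i + d - 1/2) i *
        fallingFactorial ((k:ℝ) + i + d - 1/2) (k + i) /
        fallingFactorial ((k:ℝ) + 2*i + d - 1/2) k := by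
    rw [eq_div_iff hAk, mul_comm _ (fallingFactorial ((k:ℝ) + 2*i + d - 1/2) k), hsplit]
  rw [hsplit']
  have f1 : ((k+2*i+d).factorial : ℝ) ≠ 0 := by exact_mod_cast Nat.factorial_ne_zero _
  have f2 : ((k+d).factorial : ℝ) ≠ 0 := by exact_mod_cast Nat.factorial_ne_zero _
  have f3 : ((2*i).factorial : ℝ) ≠ 0 := by exact_mod_cast Nat.factorial_ne_zero _
  have f4 : ((k+i+d).factorial : ℝ) ≠ 0 := by exact_mod_cast Nat.factorial_ne_zero _
  have f5 : (d.factorial : ℝ) ≠ 0 := by exact_mod_cast Nat.factorial_ne_zero _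
  have f6 : ((2*d).factorial : ℝ) ≠ 0 := by exact_mod_cast Nat.factorial_ne_zero _
  have f7 : ((d+d).factorial : ℝ) ≠ 0 := by exact_mod_cast Nat.factorial_ne_zero _
  have hAi : fallingFactorial ((k:ℝ) + 2*i + d - 1/2) i ≠ 0 := by
    have := ff_ne_zero_half' ((k:ℝ) + 2*i + d) i (by push_cast; nlinarith [Nat.cast_nonneg (α := ℝ) k, Nat.cast_nonneg (α := ℝ) i, Nat.cast_nonneg (α := ℝ) d])
    convert this using 2
  field_simp
  ring_nf
  have hFk : fallingFactorial (-1/2 + (k:ℝ) + ↑i * 2 + ↑d) k ≠ 0 := by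
    have := ff_ne_zero_half' ((k:ℝ) + 2*i + d) k
      (by nlinarith [Nat.cast_nonneg (α := ℝ) i, Nat.cast_nonneg (α := ℝ) d])
    convert this using 2
    ring
  have hFi : fallingFactorial (-1/2 + (k:ℝ) + ↑i * 2 + ↑d) i ≠ 0 := by
    have := ff_ne_zero_half' ((k:ℝ) + 2*i + d) i
      (by nlinarith [Nat.cast_nonneg (α := ℝ) k, Nat.cast_nonneg (α := ℝ) d])
    convert this using 2
    ring
  have f2' : ((k + d).factorial : ℝ) ≠ 0 := by exact_mod_cast Nat.factorial_ne_zero _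
  have f3' : ((i * 2).factorial : ℝ) ≠ 0 := by exact_mod_cast Nat.factorial_ne_zero _
  have h4k : (4:ℝ)^k = 2^(k*2) := by
    rw [show (4:ℝ) = 2^2 from by norm_num, ← pow_mul, Nat.mul_comm]
  have h4i : (4:ℝ)^i = 2^(i*2) := by
    rw [show (4:ℝ) = 2^2 from by norm_num, ← pow_mul, Nat.mul_comm]
  rw [h4k, h4i]
  linear_combination (-(fallingFactorial (-1 / 2 + (k:ℝ) + ↑i + ↑d) (k + i) * ((d * 2).factorial : ℝ) * 2 ^ (k * 2) * 2 ^ (i * 2) * 2 ^ d)) * mul_inv_cancel₀ hFk + (-(fallingFactorial (-1 / 2 + (k:ℝ) + ↑i + ↑d) (k + i) * ((d * 2).factorial : ℝ) * 2 ^ (k * 2) * 2 ^ (i * 2) * 2 ^ d) * (fallingFactorial (-1 / 2 + (k:ℝ) + ↑i * 2 + ↑d) k * (fallingFactorial (-1 / 2 + (k:ℝ) + ↑i * 2 + ↑d) k)⁻¹)) * mul_inv_cancel₀ hFi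


end LegAux

open Polynomial Finset LegAux in
theorem legendre_iteratedDeriv_expansion
    (α : ℕ → ℕ → ℕ → ℝ)
    (hα : ∀ n k i : ℕ, k ≤ n → 2 * i ≤ n - k →
      α n k i =
        2 ^ (k + 2 * i) * fallingFactorial ((n : ℝ) - 1 / 2) k *
            fallingFactorial ((n : ℝ) - i) i *
            fallingFactorial ((n : ℝ) - k - 1 / 2) (2 * i) /
          (fallingFactorial ((2 * i : ℕ) : ℝ) (2 * i) *
            fallingFactorial ((n : ℝ) - 1 / 2) i) -
        ∑ l ∈ Finset.range i,
          (fallingFactorial (2 * ((n : ℝ) - k - i - l)) (2 * (i - l)) /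
              fallingFactorial (2 * ((i : ℝ) - l)) (2 * (i - l))) * α n k l) :
    ∀ n k : ℕ, k ≤ n → ∀ x : ℝ,
      iteratedDeriv k (legendre n) x =
        ∑ i ∈ Finset.range ((n - k) / 2 + 1), α n k i * legendre (n - k - 2 * i) x := by

  intro n k hk x
  rw [iteratedDeriv_legendre]
  have hQ : derivative^[k] (Leg n)
      = ∑ i ∈ Finset.range ((n-k)/2+1), C (α n k i) * Leg (n-k-2*i) := by
    rw [← sub_eq_zero]
    apply poly_eq_zero _ (n - k)
    · -- degree
      refine le_trans (natDegree_sub_le _ _) (max_le ?_ ?_)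
      · exact le_trans (natDegree_iterate_derivative _ _)
          (by have := natDegree_Leg n; omega)
      · refine natDegree_sum_le_of_forall_le _ _ (fun i hi => ?_)
        refine le_trans (natDegree_C_mul_le _ _) (le_trans (natDegree_Leg _) (by omega))
    · -- parity
      rw [sub_comp, Polynomial.sum_comp]
      have h1 : ((derivative^[k] (Leg n)).comp (-X))
          = C ((-1:ℝ)^(n-k)) * derivative^[k] (Leg n) := by
        rw [comp_neg_iterate, Leg_comp_neg, iterate_derivative_C_mul, ← mul_assoc, ← C_mul]
        congr 2
        rw [show n = k + (n - k) from by omega, pow_add, ← mul_assoc, ← mul_pow]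
        norm_num
      have h2 : ∀ i ∈ Finset.range ((n-k)/2+1),
          (C (α n k i) * Leg (n-k-2*i)).comp (-X)
            = C ((-1:ℝ)^(n-k)) * (C (α n k i) * Leg (n-k-2*i)) := by
        intro i hi
        rw [Finset.mem_range] at hi
        rw [mul_comp, C_comp, Leg_comp_neg]
        have : ((-1:ℝ))^(n-k-2*i) = (-1)^(n-k) := by
          rw [show n - k = (n-k-2*i) + 2*i from by omega, pow_add, pow_mul]
          norm_num
        rw [this]
        ring
      rw [Finset.sum_congr rfl h2, h1, ← Finset.mul_sum, mul_sub]
    · -- evaluation conditions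
      intro i0 h2i0
      rw [iterate_derivative_sub, iterate_derivative_sum, eval_sub, eval_finset_sum, sub_eq_zero]
      have hkd : derivative^[n-k-2*i0] (derivative^[k] (Leg n)) = derivative^[n-2*i0] (Leg n) := by
        rw [← Function.iterate_add_apply, show n-k-2*i0 + k = n - 2*i0 from by omega]
      rw [hkd, eval_one_Leg n (n-2*i0) (by omega)]
      have hterm : ∀ i ∈ Finset.range ((n-k)/2+1),
          eval 1 (derivative^[n-k-2*i0] (C (α n k i) * Leg (n-k-2*i)))
            = α n k i * eval 1 (derivative^[n-k-2*i0] (Leg (n-k-2*i))) := by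
        intro i hi
        rw [iterate_derivative_C_mul, eval_mul, eval_C]
      rw [Finset.sum_congr rfl hterm]
      rw [← Finset.sum_subset (Finset.range_subset_range.2 (show i0+1 ≤ (n-k)/2+1 by omega))
        (fun i hi hni => by
          rw [Finset.mem_range] at hi
          rw [Finset.mem_range, not_lt] at hni
          rw [iterate_derivative_eq_zero (lt_of_le_of_lt (natDegree_Leg _)
            (show n-k-2*i < n-k-2*i0 by omega)), eval_zero, mul_zero])]
      have hvals : ∀ i ∈ Finset.range (i0+1),
          α n k i * eval 1 (derivative^[n-k-2*i0] (Leg (n-k-2*i)))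
            = α n k i * V (n-k-2*i) (n-k-2*i0) := by
        intro i hi
        rw [Finset.mem_range] at hi
        rw [eval_one_Leg _ _ (show n-k-2*i0 ≤ n-k-2*i by omega)]
      rw [Finset.sum_congr rfl hvals, Finset.sum_range_succ, hα n k i0 hk h2i0]
      have hBB : ∀ l ∈ Finset.range i0,
          α n k l * V (n-k-2*l) (n-k-2*i0)
            = (fallingFactorial (2 * ((n : ℝ) - k - i0 - l)) (2 * (i0 - l)) /
               fallingFactorial (2 * ((i0 : ℝ) - l)) (2 * (i0 - l))) * α n k l
              * V (n-k-2*i0) (n-k-2*i0) := by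
        intro l hl
        rw [Finset.mem_range] at hl
        rw [show n-k-2*l = (n-k-2*i0) + 2*(i0-l) from by omega, keyB_core]
        have e2 : 2 * ((n : ℝ) - k - i0 - l) = ((2*((n-k-2*i0)+(i0-l)) : ℕ) : ℝ) := by
          rw [show (2*((n-k-2*i0)+(i0-l)) : ℕ) = 2*n - 2*k - 2*i0 - 2*l from by omega]
          rw [Nat.cast_sub (by omega), Nat.cast_sub (by omega), Nat.cast_sub (by omega)]
          push_cast
          ring
        have e3 : 2 * ((i0 : ℝ) - l) = ((2*(i0-l) : ℕ) : ℝ) := by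
          rw [Nat.cast_mul, Nat.cast_sub (by omega)]
          push_cast
          ring
        rw [e2, e3, ff_nat, ff_nat, Nat.descFactorial_self]
        ring
      rw [Finset.sum_congr rfl hBB, ← Finset.sum_mul]
      have hA : V n (n - 2*i0) = V (n-k-2*i0) (n-k-2*i0) *
          (2 ^ (k + 2*i0) * fallingFactorial ((n:ℝ) - 1/2) k * fallingFactorial ((n:ℝ) - i0) i0 *
            fallingFactorial ((n:ℝ) - k - 1/2) (2*i0) /
           (fallingFactorial (((2*i0 : ℕ)) : ℝ) (2*i0) * fallingFactorial ((n:ℝ) - 1/2) i0)) := by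
        have hk2 := keyA_core k i0 (n-k-2*i0)
        rw [show k + 2*i0 + (n-k-2*i0) = n from by omega,
            show k + (n-k-2*i0) = n - 2*i0 from by omega] at hk2
        have c1 : (k:ℝ) + 2*i0 + ((n-k-2*i0 : ℕ) : ℝ) - 1/2 = (n:ℝ) - 1/2 := by
          rw [Nat.cast_sub (by omega), Nat.cast_sub (by omega)]
          push_cast
          ring
        have c2 : (k:ℝ) + i0 + ((n-k-2*i0 : ℕ) : ℝ) = (n:ℝ) - i0 := by
          rw [Nat.cast_sub (by omega), Nat.cast_sub (by omega)]
          push_cast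
          ring
        have c3 : (2*i0:ℝ) + ((n-k-2*i0 : ℕ) : ℝ) - 1/2 = (n:ℝ) - k - 1/2 := by
          rw [Nat.cast_sub (by omega), Nat.cast_sub (by omega)]
          push_cast
          ring
        have c4 : ((2*i0).factorial : ℝ) = fallingFactorial (((2*i0 : ℕ)) : ℝ) (2*i0) := by
          rw [ff_nat, Nat.descFactorial_self]
        rw [c1, c2, c3, c4] at hk2
        exact hk2
      rw [hA]
      ring
  rw [hQ, eval_finset_sum]
  refine Finset.sum_congr rfl (fun i hi => ?_)
  rw [eval_mul, eval_C, legendre_eq]
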